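/- A nonzero polynomial f ∈ k[x_1,...,x_n] has no intruder if and only if for every w ∈ ℝ^n such that the w-initial form f^w is a monomial, there exists i with 1 ≤ i ≤ n such that x_i does not divide f^w. -/

import Mathlib

open MvPolynomial

/-- The `w`-weight `a·w` of an exponent vector `a`. -/
def mwt {n : ℕ} {Γ : Type*} [AddCommGroup Γ] (w : Fin n → Γ) (a : Fin n →₀ ℕ) : Γ :=
  a.sum fun i e => e • w i

/-- The `w`-degree of a polynomial, with `deg_w 0 = ⊥`. -/
noncomputable def wdeg {k : Type*} [CommRing k] {n : ℕ} {Γ : Type*}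
    [AddCommGroup Γ] [LinearOrder Γ] [IsOrderedAddMonoid Γ] (w : Fin n → Γ) (f : MvPolynomial (Fin n) k) : WithBot Γ :=
  f.support.sup fun a => ((mwt w a : Γ) : WithBot Γ)

/-- The `w`-initial form of a polynomial (`0` for the zero polynomial). -/
noncomputable def initForm {k : Type*} [CommRing k] {n : ℕ} {Γ : Type*}
    [AddCommGroup Γ] [LinearOrder Γ] [IsOrderedAddMonoid Γ] (w : Fin n → Γ) (f : MvPolynomial (Fin n) k) :
    MvPolynomial (Fin n) k :=
  ∑ a ∈ f.support.filter (fun a => ((mwt w a : Γ) : WithBot Γ) = wdeg w f),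
    monomial a (f.coeff a)

noncomputable def emb (n : ℕ) : (Fin n →₀ ℕ) → (Fin n → ℝ) := fun a i => (a i : ℝ)

lemma emb_inj {n : ℕ} : Function.Injective (emb n) := by
  intro a b h
  ext i
  have := congrFun h i
  simpa [emb] using this

lemma mwt_eq_sum {n : ℕ} (w : Fin n → ℝ) (a : Fin n →₀ ℕ) :
    mwt w a = ∑ i, (a i : ℝ) * w i := by
  rw [mwt, Finsupp.sum_fintype]
  · simp [nsmul_eq_mul]
  · simp

lemma coeff_initForm {k : Type*} [CommRing k] {n : ℕ} (w : Fin n → ℝ)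
    (f : MvPolynomial (Fin n) k) (b : Fin n →₀ ℕ) :
    coeff b (initForm w f) =
      if b ∈ f.support.filter (fun a => ((mwt w a : ℝ) : WithBot ℝ) = wdeg w f)
      then f.coeff b else 0 := by
  rw [initForm]
  simp only [coeff_sum, coeff_monomial]
  rw [Finset.sum_ite_eq']

section
variable {k : Type*} [CommRing k] {n : ℕ}

/-- If `a` strictly maximizes `mwt w` on the support, `initForm` is the monomial at `a`. -/
lemma initForm_eq_monomial_of_max (w : Fin n → ℝ) {f : MvPolynomial (Fin n) k}
    {a : Fin n →₀ ℕ} (ha : a ∈ f.support)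
    (h : ∀ b ∈ f.support, b ≠ a → mwt w b < mwt w a) :
    initForm w f = monomial a (f.coeff a) := by
  have hw : wdeg w f = ((mwt w a : ℝ) : WithBot ℝ) := by
    refine le_antisymm (Finset.sup_le fun b hb => ?_)
      (Finset.le_sup (f := fun b => ((mwt w b : ℝ) : WithBot ℝ)) ha)
    rcases eq_or_ne b a with rfl | hba
    · exact le_rfl
    · exact_mod_cast (h b hb hba).le
  have hS : f.support.filter (fun b => ((mwt w b : ℝ) : WithBot ℝ) = wdeg w f) = {a} := by
    ext b
    simp only [Finset.mem_filter, Finset.mem_singleton, hw, WithBot.coe_inj]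
    constructor
    · rintro ⟨hb, heq⟩
      by_contra hba
      exact absurd heq (h b hb hba).ne
    · rintro rfl
      exact ⟨ha, rfl⟩
  rw [initForm, hS, Finset.sum_singleton]

/-- Conversely, if `initForm w f` is a monomial then it is the monomial at a
strict maximizer `a`. -/
lemma exists_max_of_initForm_eq_monomial {w : Fin n → ℝ} {f : MvPolynomial (Fin n) k}
    (hf : f ≠ 0) {a : Fin n →₀ ℕ} {c : k} (hm : initForm w f = monomial a c) :
    a ∈ f.support ∧ c = f.coeff a ∧ ∀ b ∈ f.support, b ≠ a → mwt w b < mwt w a := by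
  set S := f.support.filter (fun b => ((mwt w b : ℝ) : WithBot ℝ) = wdeg w f) with hSdef
  obtain ⟨b0, hb0, hb0eq⟩ := Finset.exists_mem_eq_sup f.support
    (MvPolynomial.support_nonempty.2 hf) (fun a => ((mwt w a : ℝ) : WithBot ℝ))
  have hb0S : b0 ∈ S := Finset.mem_filter.2 ⟨hb0, hb0eq.symm⟩
  have hsub : S ⊆ {a} := by
    intro b hb
    have hbne : coeff b (initForm w f) ≠ 0 := by
      rw [coeff_initForm]
      rw [hSdef] at hb
      rw [if_pos hb]
      exact (mem_support_iff.1 (Finset.mem_filter.1 hb).1)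
    rw [hm, coeff_monomial] at hbne
    simp only [Finset.mem_singleton]
    by_contra hba
    rw [if_neg (fun h => hba h.symm)] at hbne
    exact hbne rfl
  have hSa : S = {a} := Finset.eq_singleton_iff_nonempty_unique_mem.2
    ⟨⟨b0, hb0S⟩, fun b hb => Finset.mem_singleton.1 (hsub hb)⟩
  have haS : a ∈ S := hSa ▸ Finset.mem_singleton_self a
  have haf : a ∈ f.support := (Finset.mem_filter.1 haS).1
  have hwdeg : ((mwt w a : ℝ) : WithBot ℝ) = wdeg w f := (Finset.mem_filter.1 haS).2
  refine ⟨haf, ?_, ?_⟩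
  · have := coeff_initForm w f a
    rw [hSdef] at haS
    rw [hm, coeff_monomial, if_pos rfl, if_pos haS] at this
    exact this
  · intro b hb hba
    have hle : ((mwt w b : ℝ) : WithBot ℝ) ≤ wdeg w f :=
      Finset.le_sup (f := fun b => ((mwt w b : ℝ) : WithBot ℝ)) hb
    rw [← hwdeg] at hle
    have hne : ((mwt w b : ℝ) : WithBot ℝ) ≠ ((mwt w a : ℝ) : WithBot ℝ) := by
      intro h
      exact hba (Finset.mem_singleton.1 (hSa ▸ Finset.mem_filter.2 ⟨hb, h.trans hwdeg⟩))
    exact_mod_cast lt_of_le_of_ne hle hne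

end

/-- A point of a finite set strictly maximizing a linear functional is an extreme point
of the convex hull. -/
lemma mem_extremePoints_of_strict_max {E : Type*} [AddCommGroup E] [Module ℝ E]
    (L : E →ₗ[ℝ] ℝ) (T : Finset E) {va : E} (hva : va ∈ T)
    (hmax : ∀ y ∈ T, y ≠ va → L y < L va) :
    va ∈ (convexHull ℝ (↑T : Set E)).extremePoints ℝ := by
  set M : ℝ := L va with hM
  have key : ∀ x ∈ convexHull ℝ (↑T : Set E), L x ≤ M ∧ (L x = M → x = va) := by
    intro x hx
    rw [Finset.convexHull_eq, Set.mem_setOf_eq] at hx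
    obtain ⟨g, hg0, hg1, hgx⟩ := hx
    rw [T.centerMass_eq_of_sum_1 _ hg1] at hgx
    have hLy : ∀ y ∈ T, L y ≤ M := by
      intro y hy
      rcases eq_or_ne y va with rfl | hne
      · exact le_rfl
      · exact (hmax y hy hne).le
    have hLx : L x = ∑ y ∈ T, g y * L y := by
      rw [← hgx, map_sum]
      simp [LinearMap.map_smul, smul_eq_mul]
    have hle : L x ≤ M := by
      rw [hLx]
      calc ∑ y ∈ T, g y * L y ≤ ∑ y ∈ T, g y * M := by
            refine Finset.sum_le_sum fun y hy => ?_
            exact mul_le_mul_of_nonneg_left (hLy y hy) (hg0 y hy)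
        _ = M := by rw [← Finset.sum_mul, hg1, one_mul]
    refine ⟨hle, fun hEq => ?_⟩
    have hzero : ∀ y ∈ T, g y * (M - L y) = 0 := by
      have hsum0 : ∑ y ∈ T, g y * (M - L y) = 0 := by
        have : ∑ y ∈ T, g y * (M - L y) = (∑ y ∈ T, g y * M) - ∑ y ∈ T, g y * L y := by
          rw [← Finset.sum_sub_distrib]
          congr 1; ext y; ring
        rw [this, ← Finset.sum_mul, hg1, one_mul, ← hLx, hEq, sub_self]
      intro y hy
      exact (Finset.sum_eq_zero_iff_of_nonneg fun y hy =>
        mul_nonneg (hg0 y hy) (sub_nonneg.2 (hLy y hy))).1 hsum0 y hy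
    have hgz : ∀ y ∈ T, y ≠ va → g y = 0 := by
      intro y hy hne
      have := hzero y hy
      rcases mul_eq_zero.1 this with h | h
      · exact h
      · exact absurd (by linarith [sub_eq_zero.1 h] : L y = M) (hmax y hy hne).ne
    have hgva : g va = 1 := by
      rw [← hg1]
      exact (Finset.sum_eq_single_of_mem va hva (fun y hy hne => hgz y hy hne)).symm
    rw [← hgx]
    rw [Finset.sum_eq_single_of_mem va hva (fun y hy hne => by rw [hgz y hy hne, zero_smul])]
    rw [hgva, one_smul]
    rfl
  refine ⟨subset_convexHull ℝ _ hva, ?_⟩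
  rintro x₁ hx₁ x₂ hx₂ ⟨t, s, ht, hs, hts, heq⟩
  have h1 := key x₁ hx₁
  have h2 := key x₂ hx₂
  have hLva : t * L x₁ + s * L x₂ = M := by
    have h : L (t • x₁ + s • x₂) = L va := by rw [heq]
    simpa [map_add, map_smul, smul_eq_mul, hM] using h
  have hL1 : L x₁ = M := by
    by_contra hne
    have : L x₁ < M := lt_of_le_of_ne h1.1 hne
    have e1 := mul_lt_mul_of_pos_left this ht
    have e2 := mul_le_mul_of_nonneg_left h2.1 hs.le
    have hMsum : t * M + s * M = M := by rw [← add_mul, hts, one_mul]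
    linarith
  have hL2 : L x₂ = M := by
    by_contra hne
    have : L x₂ < M := lt_of_le_of_ne h2.1 hne
    have e1 := mul_lt_mul_of_pos_left this hs
    have e2 := mul_le_mul_of_nonneg_left h1.1 ht.le
    have hMsum : t * M + s * M = M := by rw [← add_mul, hts, one_mul]
    linarith
  exact h1.2 hL1

/-- A nonzero `f` has no intruder iff for every `w ∈ ℝ^n` with `f^w` a monomial,
some variable `x_i` does not divide `f^w`. -/
theorem no_intruder_iff {k : Type*} [CommRing k] [IsDomain k] {n : ℕ}
    (f : MvPolynomial (Fin n) k) (hf : f ≠ 0) :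
    (∀ v ∈ Set.extremePoints ℝ (convexHull ℝ
        ((fun a : Fin n →₀ ℕ => fun i => (a i : ℝ)) '' ↑f.support)), ∃ l, v l = 0)
    ↔ ∀ w : Fin n → ℝ, (∃ a c, initForm w f = monomial a c) →
        ∃ i, ¬ X i ∣ initForm w f := by
  have hfun : (fun a : Fin n →₀ ℕ => fun i => (a i : ℝ)) = emb n := rfl
  set T : Finset (Fin n → ℝ) := f.support.image (emb n) with hT
  have hTset : ((fun a : Fin n →₀ ℕ => fun i => (a i : ℝ)) '' ↑f.support) = (↑T : Set (Fin n → ℝ)) := by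
    rw [hfun, hT, Finset.coe_image]
  rw [hTset]
  constructor
  · -- forward
    intro H w hmono
    obtain ⟨a, c, hm⟩ := hmono
    obtain ⟨haf, hc, hstrict⟩ := exists_max_of_initForm_eq_monomial hf hm
    -- the linear functional
    set L : (Fin n → ℝ) →ₗ[ℝ] ℝ := ∑ i, w i • LinearMap.proj i with hL
    have hLemb : ∀ b : Fin n →₀ ℕ, L (emb n b) = mwt w b := by
      intro b
      rw [mwt_eq_sum, hL]
      simp [LinearMap.sum_apply, LinearMap.smul_apply, LinearMap.proj_apply, smul_eq_mul,
        emb, mul_comm]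
    have hmaxT : ∀ y ∈ T, y ≠ emb n a → L y < L (emb n a) := by
      intro y hy hne
      obtain ⟨b, hb, rfl⟩ := Finset.mem_image.1 hy
      have hba : b ≠ a := fun h => hne (by rw [h])
      rw [hLemb, hLemb]
      exact hstrict b hb hba
    have hext := mem_extremePoints_of_strict_max L T (Finset.mem_image_of_mem _ haf) hmaxT
    obtain ⟨l, hl⟩ := H (emb n a) hext
    have hal : a l = 0 := by
      have : ((a l : ℕ) : ℝ) = 0 := hl
      exact_mod_cast this
    refine ⟨l, ?_⟩
    rw [hm, X_dvd_monomial]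
    push_neg
    refine ⟨?_, hal⟩
    rw [hc]
    exact mem_support_iff.1 haf
  · -- backward
    intro H v hv
    have hvT : v ∈ (↑T : Set (Fin n → ℝ)) := extremePoints_convexHull_subset hv
    obtain ⟨a, haf, rfl⟩ := Finset.mem_image.1 (by exact_mod_cast hvT)
    set va := emb n a with hva
    have hnot : va ∉ convexHull ℝ ((↑T : Set (Fin n → ℝ)) \ {va}) := by
      intro hcon
      have h1 := (convex_convexHull ℝ (↑T : Set (Fin n → ℝ))).mem_extremePoints_iff_mem_diff_convexHull_diff.1 hv
      exact h1.2 (convexHull_mono (Set.diff_subset_diff_left (subset_convexHull ℝ _)) hcon)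
    have hfin : ((↑T : Set (Fin n → ℝ)) \ {va}).Finite := T.finite_toSet.diff
    obtain ⟨g, u, hgu, hug⟩ := geometric_hahn_banach_closed_point
      (convex_convexHull ℝ _) (hfin.isClosed_convexHull (𝕜 := ℝ)) hnot
    set w : Fin n → ℝ := fun i => g (Pi.single i 1) with hw
    have hgemb : ∀ b : Fin n →₀ ℕ, g (emb n b) = mwt w b := by
      intro b
      have hdecomp : emb n b = ∑ i, (b i : ℝ) • (Pi.single i (1 : ℝ) : Fin n → ℝ) := by
        ext j
        simp [emb, Pi.single_apply, Finset.sum_apply]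
      rw [hdecomp, map_sum, mwt_eq_sum]
      simp [map_smul, smul_eq_mul, hw]
    have hstrict : ∀ b ∈ f.support, b ≠ a → mwt w b < mwt w a := by
      intro b hb hba
      have hmem : emb n b ∈ (↑T : Set (Fin n → ℝ)) \ {va} := by
        refine ⟨by exact_mod_cast Finset.mem_image_of_mem _ hb, ?_⟩
        simp only [Set.mem_singleton_iff, hva]
        exact fun h => hba (emb_inj h)
      have h1 := hgu _ (subset_convexHull ℝ _ hmem)
      rw [hgemb] at h1
      have h2 : u < g va := hug
      rw [hva, hgemb] at h2
      linarith
    have hmono := initForm_eq_monomial_of_max w haf hstrict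
    obtain ⟨i, hi⟩ := H w ⟨a, f.coeff a, hmono⟩
    rw [hmono, X_dvd_monomial] at hi
    push_neg at hi
    refine ⟨i, ?_⟩
    have : a i = 0 := hi.2
    simp [hva, emb, this]
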